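/- With the prefix-sum iteration defined as: val_0 i = x i, prev_0 i = i - 1, val_{j+1} i = val_j i + (if prev_j i ≥ 0 then val_j (prev_j i) else 0), prev_{j+1} i = (if prev_j i ≥ 0 then prev_j (prev_j i) else -1), for all i < n: prev_j i = -1 for all j ≥ ⌈log₂ (i+1)⌉ + 1, and consequently val_j i = ∑_{k=0}^{i} x k for all such j. In particular, after ⌈log₂ n⌉ + 1 iterations every position i holds the full prefix sum ∑_{k=0}^{i} x k and no further iteration changes any value. -/

import Mathlib

/-- Hillis–Steele prefix sum termination: position `i` has a nil predecessor and the full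
prefix sum from iteration `⌈log₂ (i+1)⌉ + 1` on; after `⌈log₂ n⌉ + 1` iterations every
position holds the full prefix sum and nothing changes any more. -/
theorem prefix_sum_termination
    (n : ℕ) (hn : 1 ≤ n) (x : ℤ → ℤ)
    (val prev : ℕ → ℤ → ℤ)
    (hval0 : ∀ i : ℤ, 0 ≤ i → i < n → val 0 i = x i)
    (hprev0 : ∀ i : ℤ, 0 ≤ i → i < n → prev 0 i = i - 1)
    (hvalS : ∀ (j : ℕ) (i : ℤ), 0 ≤ i → i < n →
      val (j + 1) i = val j i + (if 0 ≤ prev j i then val j (prev j i) else 0))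
    (hprevS : ∀ (j : ℕ) (i : ℤ), 0 ≤ i → i < n →
      prev (j + 1) i = (if 0 ≤ prev j i then prev j (prev j i) else -1)) :
    (∀ i : ℤ, 0 ≤ i → i < n → ∀ j : ℕ, Nat.clog 2 (i.toNat + 1) + 1 ≤ j →
        prev j i = -1 ∧ val j i = ∑ k ∈ Finset.Icc 0 i, x k) ∧
    (∀ j : ℕ, Nat.clog 2 n + 1 ≤ j → ∀ i : ℤ, 0 ≤ i → i < n →
        val j i = ∑ k ∈ Finset.Icc 0 i, x k ∧
        val j i = val (Nat.clog 2 n + 1) i ∧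
        prev j i = prev (Nat.clog 2 n + 1) i) := by
  have key : ∀ j : ℕ, ∀ i : ℤ, 0 ≤ i → i < n →
      prev j i = (if (2:ℤ)^j ≤ i then i - 2^j else -1) ∧
      val j i = ∑ k ∈ Finset.Ioc (max (-1) (i - 2^j)) i, x k := by
    intro j
    induction j with
    | zero =>
      intro i hi0 hin
      constructor
      · rw [hprev0 i hi0 hin, pow_zero]
        split_ifs <;> omega
      · rw [hval0 i hi0 hin, pow_zero]
        have hm : max (-1) (i - 1) = i - 1 := by omega
        have hs : Finset.Ioc (i - 1) i = {i} := by
          ext k; simp; omega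
        rw [hm, hs, Finset.sum_singleton]
    | succ j ih =>
      intro i hi0 hin
      obtain ⟨hp, hv⟩ := ih i hi0 hin
      have h2pos : (0:ℤ) < 2^j := by positivity
      have e : (2:ℤ)^(j+1) = 2^j + 2^j := by ring
      by_cases hc : (2:ℤ)^j ≤ i
      · have hpv : prev j i = i - 2^j := by rw [hp, if_pos hc]
        have hppos : 0 ≤ prev j i := by rw [hpv]; omega
        obtain ⟨hp', hv'⟩ := ih (i - 2^j) (by omega) (by omega)
        constructor
        · rw [hprevS j i hi0 hin, if_pos hppos, hpv, hp']
          split_ifs <;> omega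
        · rw [hvalS j i hi0 hin, if_pos hppos, hpv, hv, hv']
          have hmax : max (-1) (i - 2^j) = i - 2^j := by omega
          rw [hmax, add_comm]
          have h1 : max (-1) (i - 2^j - 2^j) ≤ i - 2^j := by omega
          have h2 : i - 2^j ≤ i := by omega
          have hm2 : max (-1) (i - 2^(j+1)) = max (-1) (i - 2^j - 2^j) := by omega
          rw [hm2, ← Finset.Ioc_union_Ioc_eq_Ioc h1 h2,
            Finset.sum_union (by rw [Finset.disjoint_left]; intro a ha hb; simp only [Finset.mem_Ioc] at ha hb; omega)]
      · have hpneg : ¬ 0 ≤ prev j i := by rw [hp, if_neg hc]; omega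
        constructor
        · rw [hprevS j i hi0 hin, if_neg hpneg, if_neg]
          omega
        · rw [hvalS j i hi0 hin, if_neg hpneg, add_zero, hv]
          congr 2
          omega
  have main : ∀ i : ℤ, 0 ≤ i → i < n → ∀ j : ℕ, Nat.clog 2 (i.toNat + 1) + 1 ≤ j →
      prev j i = -1 ∧ val j i = ∑ k ∈ Finset.Icc 0 i, x k := by
    intro i hi0 hin j hj
    have h1 : i.toNat + 1 ≤ 2^j := (Nat.clog_le_iff_le_pow one_lt_two).mp (by omega)
    have h2 : i < (2:ℤ)^j := by
      have := (Int.ofNat_le.mpr h1)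
      push_cast at this
      omega
    obtain ⟨hp, hv⟩ := key j i hi0 hin
    refine ⟨by rw [hp, if_neg (not_le.mpr h2)], ?_⟩
    rw [hv]
    congr 1
    ext k; simp; omega
  refine ⟨main, ?_⟩
  intro j hj i hi0 hin
  have hle : i.toNat + 1 ≤ n := by omega
  have hc : Nat.clog 2 (i.toNat + 1) ≤ Nat.clog 2 n := Nat.clog_mono_right 2 hle
  obtain ⟨hp1, hv1⟩ := main i hi0 hin j (by omega)
  obtain ⟨hp2, hv2⟩ := main i hi0 hin (Nat.clog 2 n + 1) (by omega)
  exact ⟨hv1, by rw [hv1, hv2], by rw [hp1, hp2]⟩
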